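/- Let (C,D) be an inclusion, let w ∈ N(C,D), and let ε > 0. Then there exists d ∈ D such that ‖w − wd‖ < ε and the closure in D̂ of {σ ∈ D̂ : σ(d) ≠ 0} is contained in {σ ∈ D̂ : σ(w*w) ≠ 0}. -/

import Mathlib

open scoped ComplexOrder
open WeakDual
set_option linter.unusedSectionVars false

namespace RegularInclusion

variable {A : Type*} [NormedRing A] [StarRing A] [CStarRing A] [CompleteSpace A]
  [NormedAlgebra ℂ A] [StarModule ℂ A]

/-- The set of normalizers of the subalgebra `D` in `A`:
`N(A,D) = {v | v* D v ⊆ D and v D v* ⊆ D}`. -/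
def normSet (D : StarSubalgebra ℂ A) : Set A :=
  {v | (∀ d ∈ D, star v * d * v ∈ D) ∧ (∀ d ∈ D, v * d * star v ∈ D)}

lemma normSet.star_mul_self_mem {D : StarSubalgebra ℂ A} {v : A} (hv : v ∈ normSet D) :
    star v * v ∈ D := by simpa using hv.1 1 D.one_mem

lemma normSet.mul_star_self_mem {D : StarSubalgebra ℂ A} {v : A} (hv : v ∈ normSet D) :
    v * star v ∈ D := by simpa using hv.2 1 D.one_mem

/-- `D` is abelian. -/
def IsAbelian (D : StarSubalgebra ℂ A) : Prop := ∀ x ∈ D, ∀ y ∈ D, x * y = y * x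

/-- `(A, D)` is an inclusion: `D` is an abelian closed unital `C*`-subalgebra of `A`. -/
def IsInclusion (D : StarSubalgebra ℂ A) : Prop := IsAbelian D ∧ IsClosed (D : Set A)

/-- `(A, D)` is a regular inclusion: an inclusion for which the closed linear span of the
normalizers is all of `A`. -/
def IsRegularIncl (D : StarSubalgebra ℂ A) : Prop :=
  IsInclusion D ∧ closure (Submodule.span ℂ (normSet D) : Set A) = Set.univ

/-- `D` is a MASA in `A`: `D` is abelian and contains every element commuting with it. -/
def IsMasa (D : StarSubalgebra ℂ A) : Prop :=
  IsAbelian D ∧ ∀ x : A, (∀ d ∈ D, x * d = d * x) → x ∈ D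

/-- The relative commutant `D^c` of `D` in `A`. -/
def relComm (D : StarSubalgebra ℂ A) : StarSubalgebra ℂ A :=
  { Subalgebra.centralizer ℂ (D : Set A) with
    star_mem' := by
      intro x hx d hd
      have h := congrArg star (hx (star d) (star_mem hd))
      simpa [star_mul] using h.symm }

lemma mem_relComm {D : StarSubalgebra ℂ A} {x : A} :
    x ∈ relComm D ↔ ∀ d ∈ D, d * x = x * d := Iff.rfl

/-- `E : A → A` is a conditional expectation onto `D`. -/
structure IsCondExp [PartialOrder A] [StarOrderedRing A] (D : StarSubalgebra ℂ A)
    (E : A →ₗ[ℂ] A) : Prop where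
  mem : ∀ x : A, E x ∈ D
  idOn : ∀ d ∈ D, E d = d
  pos : ∀ x : A, 0 ≤ x → 0 ≤ E x
  bimod : ∀ d ∈ D, ∀ d' ∈ D, ∀ x : A, E (d * x * d') = d * E x * d'

/-- A linear map is faithful if `E (x* x) = 0` implies `x = 0`. -/
def Faithful (E : A →ₗ[ℂ] A) : Prop := ∀ x : A, E (star x * x) = 0 → x = 0

/-- `(A,D)` is a Cartan inclusion: a regular MASA inclusion admitting a faithful conditional
expectation onto `D`. -/
def IsCartanIncl [PartialOrder A] [StarOrderedRing A] (D : StarSubalgebra ℂ A) : Prop :=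
  IsRegularIncl D ∧ IsMasa D ∧ ∃ E : A →ₗ[ℂ] A, IsCondExp D E ∧ Faithful E

/-- The fixed-point set of the partial homeomorphism `β_v` of the character space of `D`:
those characters `σ` with `σ(v*v) > 0` and `σ(v* h v) = σ(h)·σ(v*v)` for all `h ∈ D`. -/
def fixBeta (D : StarSubalgebra ℂ A) {v : A} (hv : v ∈ normSet D) :
    Set (characterSpace ℂ ↥D) :=
  {σ | 0 < σ (⟨star v * v, normSet.star_mul_self_mem hv⟩ : D) ∧
    ∀ h : D, σ (⟨star v * (h : A) * v, hv.1 (h : A) h.2⟩ : D)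
      = σ h * σ (⟨star v * v, normSet.star_mul_self_mem hv⟩ : D)}

/-- A subset `S` of a topological algebra `B` is essential in `B` if the only closed two-sided
ideal of `B` meeting `S` trivially is the zero ideal. -/
def EssentialInSet (B : Type*) [NonUnitalNonAssocRing B] [TopologicalSpace B]
    (S : Set B) : Prop :=
  ∀ J : TwoSidedIdeal B, IsClosed (J : Set B) → (J : Set B) ∩ S = {0} → J = ⊥

section Two
variable {B : Type*} [NormedRing B] [StarRing B] [CStarRing B] [CompleteSpace B]
  [NormedAlgebra ℂ B] [StarModule ℂ B]

/-- A `*`-homomorphism between inclusions is regular if it maps `D` into `D₁` and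
normalizers to normalizers. -/
def IsRegularHom (D : StarSubalgebra ℂ A) (D₁ : StarSubalgebra ℂ B) (α : A →⋆ₐ[ℂ] B) : Prop :=
  (∀ d ∈ D, α d ∈ D₁) ∧ (∀ v ∈ normSet D, α v ∈ normSet D₁)

/-- `(B, D₁, α)` is a package for the regular inclusion `(A, D)`, witnessed by the faithful
conditional expectation `E₁`: `(B,D₁)` is a regular inclusion, `α` is an injective regular
`*`-homomorphism, `B` is generated as a `C*`-algebra by `α(A) ∪ E₁(α(A))` and `D₁` is
generated by `E₁(α(A))`. -/
def IsPackage [PartialOrder B] [StarOrderedRing B] (D : StarSubalgebra ℂ A)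
    (D₁ : StarSubalgebra ℂ B) (α : A →⋆ₐ[ℂ] B) (E₁ : B →ₗ[ℂ] B) : Prop :=
  IsRegularIncl D₁ ∧ Function.Injective α ∧ IsRegularHom D D₁ α ∧
    IsCondExp D₁ E₁ ∧ Faithful E₁ ∧
    (StarAlgebra.adjoin ℂ (Set.range ⇑α ∪ ⇑E₁ '' Set.range ⇑α)).topologicalClosure = ⊤ ∧
    (StarAlgebra.adjoin ℂ (⇑E₁ '' Set.range ⇑α)).topologicalClosure = D₁

/-- `(D₁, α|_D)` is an essential extension of `D`. -/
def EssentialExtIn (D : StarSubalgebra ℂ A) (D₁ : StarSubalgebra ℂ B) (α : A →⋆ₐ[ℂ] B) : Prop :=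
  EssentialInSet ↥D₁ {x : ↥D₁ | ∃ d ∈ D, α d = (x : B)}

/-- `(B, D₁, α)` is a Cartan envelope of `(A, D)`, witnessed by the faithful conditional
expectation `E₁`: a package for which `(B,D₁)` is moreover a Cartan inclusion (i.e. `D₁` is
a MASA in `B`) and `(D₁, α|_D)` is an essential extension of `D`. -/
def IsCartanEnvelope [PartialOrder B] [StarOrderedRing B] (D : StarSubalgebra ℂ A)
    (D₁ : StarSubalgebra ℂ B) (α : A →⋆ₐ[ℂ] B) (E₁ : B →ₗ[ℂ] B) : Prop :=
  IsPackage D D₁ α E₁ ∧ IsMasa D₁ ∧ EssentialExtIn D D₁ α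

end Two

/-- The set of normalizers of `Dα` relative to the subalgebra `Cα`. -/
def normSetRel (Cα Dα : StarSubalgebra ℂ A) : Set A :=
  {v | v ∈ Cα ∧ (∀ d ∈ Dα, star v * d * v ∈ Dα) ∧ (∀ d ∈ Dα, v * d * star v ∈ Dα)}

/-- `φ` is an eigenfunctional for `(A,D)` with range character `r` and source character `s`. -/
def IsEigen (D : StarSubalgebra ℂ A) (φ : A →L[ℂ] ℂ) (r s : ↥D →ₐ[ℂ] ℂ) : Prop :=
  φ ≠ 0 ∧ ∀ (d₁ d₂ : D) (x : A), φ ((d₁ : A) * x * (d₂ : A)) = r d₁ * φ x * s d₂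

/-- `f` is a state on `A`. -/
def IsState (f : A →ₗ[ℂ] ℂ) : Prop := f 1 = 1 ∧ ∀ x : A, 0 ≤ f (star x * x)

/-- `f ∈ Mod(A,D)`: a state whose restriction to `D` is multiplicative (hence a character). -/
def InMod (D : StarSubalgebra ℂ A) (f : A →ₗ[ℂ] ℂ) : Prop :=
  IsState f ∧ ∀ d₁ d₂ : D, f ((d₁ : A) * (d₂ : A)) = f (d₁ : A) * f (d₂ : A)

/-- `f` is a compatible state: a state with `|f(v)|² ∈ {0, f(v*v)}` for every normalizer `v`. -/
def IsCompatState (D : StarSubalgebra ℂ A) (f : A →ₗ[ℂ] ℂ) : Prop :=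
  IsState f ∧ ∀ v ∈ normSet D, f v = 0 ∨ (Complex.normSq (f v) : ℂ) = f (star v * v)

/-- `φ` is a compatible eigenfunctional: `|φ(v)|² ∈ {0, s(φ)(v*v)}` for every normalizer `v`. -/
def IsCompatEigen (D : StarSubalgebra ℂ A) (φ : A →L[ℂ] ℂ) (r s : ↥D →ₐ[ℂ] ℂ) : Prop :=
  IsEigen D φ r s ∧ ∀ v, ∀ hv : v ∈ normSet D,
    φ v = 0 ∨ (Complex.normSq (φ v) : ℂ)
      = s (⟨star v * v, normSet.star_mul_self_mem hv⟩ : D)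

/-- The eigenfunctional `[v,f] : x ↦ f(v* x) / f(v* v)^{1/2}`. -/
noncomputable def evf (f : A →ₗ[ℂ] ℂ) (v : A) (x : A) : ℂ :=
  f (star v * x) / (Real.sqrt (f (star v * v)).re : ℂ)

/-- A bundled unital `C*`-algebra (with its canonical partial order). -/
structure CSA where
  carrier : Type
  [nr : NormedRing carrier]
  [sr : StarRing carrier]
  [cs : CStarRing carrier]
  [cp : CompleteSpace carrier]
  [na : NormedAlgebra ℂ carrier]
  [sm : StarModule ℂ carrier]
  [po : PartialOrder carrier]
  [sor : StarOrderedRing carrier]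

attribute [instance] CSA.nr CSA.sr CSA.cs CSA.cp CSA.na CSA.sm CSA.po CSA.sor

end RegularInclusion

namespace RegularInclusion

variable {A : Type*} [NormedRing A] [StarRing A] [CStarRing A] [CompleteSpace A]
  [NormedAlgebra ℂ A] [StarModule ℂ A]

/-- for any normalizer `w` and `ε > 0` there is `d ∈ D` with `‖w - wd‖ < ε`
such that the closure of `{σ ∈ D̂ : σ(d) ≠ 0}` is contained in `{σ ∈ D̂ : σ(w*w) ≠ 0}`. -/
theorem stmt19 (D : StarSubalgebra ℂ A) (hD : IsInclusion D)
    (w : A) (hw : w ∈ normSet D) (ε : ℝ) (hε : 0 < ε) :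
    ∃ d : A, ∃ hd : d ∈ D, ‖w - w * d‖ < ε ∧
      closure {σ : characterSpace ℂ ↥D | σ (⟨d, hd⟩ : D) ≠ 0}
        ⊆ {σ : characterSpace ℂ ↥D |
            σ (⟨star w * w, normSet.star_mul_self_mem hw⟩ : D) ≠ 0} := by
  classical
  letI : CStarAlgebra A := ⟨⟩
  haveI : CompleteSpace ↥D := hD.2.completeSpace_coe
  letI : CStarAlgebra ↥D := ⟨⟩
  set a : A := star w * w with ha_def
  have ha : a ∈ D := normSet.star_mul_self_mem hw
  set aD : ↥D := ⟨a, ha⟩ with haD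
  have hsa : IsSelfAdjoint aD := by
    refine Subtype.ext ?_
    show star a = a
    simp [ha_def, star_mul, mul_assoc]
  set δ : ℝ := ε ^ 2 / 2 with hδ_def
  have hδ : 0 < δ := by positivity
  set f : ℝ → ℝ := fun t => max 0 (min 1 (2 * |t| / δ - 1)) with hf_def
  set g : ℝ → ℝ := fun t => max 0 (min 1 (4 * |t| / δ - 1)) with hg_def
  set h : ℝ → ℝ := fun t => g t * t / max (t ^ 2) ((δ / 4) ^ 2) with hh_def
  have hgc : Continuous g :=
    continuous_const.max (continuous_const.min
      (((continuous_const.mul continuous_abs).div_const δ).sub continuous_const))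
  have hfc : Continuous f :=
    continuous_const.max (continuous_const.min
      (((continuous_const.mul continuous_abs).div_const δ).sub continuous_const))
  have hhc : Continuous h := by
    refine ((hgc.mul continuous_id).div ((continuous_pow 2).max continuous_const) ?_)
    intro t
    have : (0:ℝ) < (δ / 4) ^ 2 := by positivity
    exact ne_of_gt (lt_max_of_lt_right this)
  -- pointwise facts
  have hf0 : ∀ t, 0 ≤ f t := fun t => le_max_left _ _
  have hf1 : ∀ t, f t ≤ 1 := fun t => max_le zero_le_one (min_le_left _ _)
  have hgf : ∀ t, g t * f t = f t := by
    intro t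
    rcases le_or_gt (|t|) (δ / 2) with hc | hc
    · have hft : f t = 0 := by
        have h2 : 2 * |t| / δ - 1 ≤ 0 := by
          rw [sub_nonpos, div_le_one hδ]
          linarith
        exact max_eq_left (min_le_of_right_le h2)
      rw [hft, mul_zero]
    · have hgt : g t = 1 := by
        have h1 : (1:ℝ) ≤ 4 * |t| / δ - 1 := by
          rw [le_sub_iff_add_le, le_div_iff₀ hδ]
          nlinarith
        simp [hg_def, min_eq_left h1]
      rw [hgt, one_mul]
  have hth : ∀ t, t * h t = g t := by
    intro t
    rcases le_or_gt (δ / 4) (|t|) with hc | hc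
    · have ht0 : t ≠ 0 := by
        intro h0
        rw [h0] at hc
        simp at hc
        nlinarith
      have hmax : max (t ^ 2) ((δ / 4) ^ 2) = t ^ 2 := by
        refine max_eq_left ?_
        calc (δ/4)^2 ≤ |t|^2 := by nlinarith [abs_nonneg t]
        _ = t ^ 2 := sq_abs t
      rw [hh_def]
      simp only
      rw [hmax]
      field_simp
    · have hgt : g t = 0 := by
        have h2 : 4 * |t| / δ - 1 ≤ 0 := by
          rw [sub_nonpos, div_le_one hδ]
          linarith
        exact max_eq_left (min_le_of_right_le h2)
      rw [hh_def]
      simp only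
      rw [hgt]
      simp
  have hbound : ∀ t, |t * (1 - f t) ^ 2| ≤ δ := by
    intro t
    rcases le_or_gt (|t|) δ with hc | hc
    · have h1 : |1 - f t| ≤ 1 := by
        rw [abs_le]; constructor <;> linarith [hf0 t, hf1 t]
      have h2 : |1 - f t| ^ 2 ≤ 1 := by nlinarith [abs_nonneg (1 - f t)]
      calc |t * (1 - f t) ^ 2| = |t| * |1 - f t| ^ 2 := by
            rw [abs_mul, abs_pow]
        _ ≤ δ * 1 := mul_le_mul hc h2 (by positivity) hδ.le
        _ = δ := mul_one δ
    · have hft : f t = 1 := by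
        have h1 : (1:ℝ) ≤ 2 * |t| / δ - 1 := by
          rw [le_sub_iff_add_le, le_div_iff₀ hδ]
          nlinarith
        simp [hf_def, min_eq_left h1]
      rw [hft]
      simp [hδ.le]
  -- the elements
  set dD : ↥D := cfc f aD with hdD
  set eD : ↥D := cfc g aD with heD
  set kD : ↥D := cfc h aD with hkD
  have hdsa : IsSelfAdjoint dD := cfc_predicate f aD
  refine ⟨(dD : A), dD.2, ?_, ?_⟩
  · -- norm estimate
    have hds : star (dD : A) = (dD : A) := congrArg Subtype.val hdsa
    have hx : w - w * (dD : A) = w * (1 - (dD : A)) := by rw [mul_sub, mul_one]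
    have hcomm : (dD : A) * a = a * (dD : A) := hD.1 _ dD.2 _ ha
    have h1 : cfc (fun t : ℝ => 1 - f t) aD = 1 - dD := by
      rw [cfc_sub (fun _ : ℝ => (1:ℝ)) f aD continuousOn_const hfc.continuousOn,
        cfc_const_one ℝ aD hsa, hdD]
    have h2 : cfc (fun t : ℝ => (1 - f t) ^ 2) aD = (1 - dD) ^ 2 := by
      rw [cfc_pow (fun t : ℝ => 1 - f t) 2 aD
        ((continuous_const.sub hfc).continuousOn) hsa, h1]
    have hyD : cfc (fun t : ℝ => t * (1 - f t) ^ 2) aD = aD * (1 - dD) ^ 2 := by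
      have h3 : cfc (fun t : ℝ => t * (1 - f t) ^ 2) aD
          = cfc (id : ℝ → ℝ) aD * cfc (fun t : ℝ => (1 - f t) ^ 2) aD :=
        cfc_mul (id : ℝ → ℝ) (fun t : ℝ => (1 - f t) ^ 2) aD continuousOn_id
          (((continuous_const.sub hfc).pow 2).continuousOn)
      rw [h3, cfc_id ℝ aD hsa, h2]
    have hnorm : ‖aD * (1 - dD) ^ 2‖ ≤ δ := by
      rw [← hyD]
      exact norm_cfc_le hδ.le (fun t _ => hbound t)
    have hsx : star (w - w * (dD : A)) * (w - w * (dD : A))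
        = ((aD * (1 - dD) ^ 2 : ↥D) : A) := by
      have hstar1 : star (1 - (dD : A)) = 1 - (dD : A) := by
        rw [star_sub, star_one, hds]
      have hcoe : ((aD * (1 - dD) ^ 2 : ↥D) : A) = a * (1 - (dD : A)) ^ 2 := by
        push_cast; rfl
      have hc2 : (1 - (dD : A)) * a = a * (1 - (dD : A)) := by
        rw [sub_mul, mul_sub, one_mul, mul_one, hcomm]
      rw [hx, star_mul, hstar1, hcoe]
      calc (1 - (dD : A)) * star w * (w * (1 - (dD : A)))
          = ((1 - (dD : A)) * (star w * w)) * (1 - (dD : A)) := by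
            rw [mul_assoc, mul_assoc, mul_assoc]
        _ = a * (1 - (dD : A)) ^ 2 := by
            rw [← ha_def, hc2, sq, mul_assoc]
    have hn2 : ‖w - w * (dD : A)‖ * ‖w - w * (dD : A)‖ ≤ δ := by
      rw [← CStarRing.norm_star_mul_self, hsx]
      exact hnorm
    nlinarith [norm_nonneg (w - w * (dD : A)), hε]
  · -- topological part
    have h_ed : eD * dD = dD := by
      rw [heD, hdD, ← cfc_mul g f aD hgc.continuousOn hfc.continuousOn]
      exact cfc_congr (fun t _ => hgf t)
    have h_e : aD * kD = eD := by
      conv_lhs => rw [← cfc_id ℝ aD hsa]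
      rw [hkD, ← cfc_mul (id : ℝ → ℝ) h aD continuousOn_id hhc.continuousOn, heD]
      exact cfc_congr (fun t _ => hth t)
    set K : Set (characterSpace ℂ ↥D) := {σ | σ eD = 1} with hK
    have hSK : {σ : characterSpace ℂ ↥D | σ (⟨(dD : A), dD.2⟩ : D) ≠ 0} ⊆ K := by
      intro σ hσ
      have hσd : σ dD ≠ 0 := by simpa using hσ
      have : σ eD * σ dD = 1 * σ dD := by
        rw [← map_mul, h_ed, one_mul]
      exact mul_right_cancel₀ hσd this
    have hKc : IsClosed K := by
      have hcont : Continuous fun σ : characterSpace ℂ ↥D => σ eD :=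
        (WeakDual.eval_continuous eD).comp continuous_subtype_val
      exact isClosed_eq hcont continuous_const
    have hKT : K ⊆ {σ : characterSpace ℂ ↥D |
        σ (⟨star w * w, normSet.star_mul_self_mem hw⟩ : D) ≠ 0} := by
      intro σ hσ hσa
      have haD0 : σ aD = 0 := hσa
      have : σ eD = 0 := by
        rw [← h_e, map_mul, haD0, zero_mul]
      rw [hK] at hσ
      simp only [Set.mem_setOf_eq] at hσ
      rw [hσ] at this
      exact one_ne_zero this
    exact (closure_minimal hSK hKc).trans hKT

end RegularInclusion
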